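/- Let A be a commutative ring, I an ideal generated by a regular sequence, and suppose I is a prime ideal. Then the associated graded ring gr_I(A) = ⊕_{d≥0} I^d/I^{d+1} is an integral domain. -/

import Mathlib

open MvPolynomial Ideal

section Aux
variable {A : Type*} [CommRing A] {n : ℕ}

lemma degree_single' {σ : Type*} (a : σ) (b : ℕ) : (Finsupp.single a b).degree = b := by
  classical
  rcases eq_or_ne b 0 with rfl | hb
  · simp [Finsupp.degree]
  · rw [Finsupp.degree_apply, Finsupp.support_single_ne_zero _ hb, Finset.sum_singleton,
      Finsupp.single_eq_same]

lemma degree_weight {σ : Type*} (m : σ →₀ ℕ) : m.degree = Finsupp.weight 1 m := by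
  rw [Finsupp.degree_eq_weight_one]; rfl

lemma degree_mapDomain {σ τ : Type*} (f : σ → τ) (u : σ →₀ ℕ) :
    (Finsupp.mapDomain f u).degree = u.degree := by
  classical
  rw [degree_weight, Finsupp.mapDomain, Finsupp.sum, map_sum]
  simp only [← degree_weight, degree_single']
  rw [Finsupp.degree_apply]

lemma prod_pow_mem (v : Fin n → A) (m : Fin n →₀ ℕ) :
    (m.prod fun i k => v i ^ k) ∈ (span (Set.range v)) ^ m.degree := by
  classical
  rw [Finsupp.prod, Finsupp.degree_apply]
  generalize m.support = s
  induction s using Finset.induction with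
  | empty => simp [Ideal.one_eq_top]
  | @insert a s ha ih =>
      rw [Finset.prod_insert ha, Finset.sum_insert ha, pow_add]
      exact Ideal.mul_mem_mul (pow_mem_pow (subset_span (Set.mem_range_self a)) _) ih

lemma evalHomog_mem (v : Fin n → A) (F : MvPolynomial (Fin n) A) {d : ℕ}
    (hF : F.IsHomogeneous d) : eval v F ∈ (span (Set.range v)) ^ d := by
  classical
  rw [F.as_sum, map_sum]
  refine sum_mem fun m hm => ?_
  rw [eval_monomial]
  have hdeg : m.degree = d := (degree_weight m).trans (hF (MvPolynomial.mem_support_iff.mp hm))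
  exact hdeg ▸ Ideal.mul_mem_left _ _ (prod_pow_mem v m)

lemma evalHomog_mem' (v : Fin n → A) (F : MvPolynomial (Fin n) A) {d : ℕ} (J : Ideal A)
    (hF : F.IsHomogeneous d) (hc : ∀ m, F.coeff m ∈ J) :
    eval v F ∈ J * (span (Set.range v)) ^ d := by
  classical
  rw [F.as_sum, map_sum]
  refine sum_mem fun m hm => ?_
  rw [eval_monomial]
  have hdeg : m.degree = d := (degree_weight m).trans (hF (MvPolynomial.mem_support_iff.mp hm))
  exact hdeg ▸ Ideal.mul_mem_mul (hc m) (prod_pow_mem v m)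

lemma evalHomog_mem'' (v : Fin n → A) (F : MvPolynomial (Fin n) A) {d : ℕ}
    (hF : F.IsHomogeneous d) (hc : ∀ m, F.coeff m ∈ span (Set.range v)) :
    eval v F ∈ (span (Set.range v)) ^ (d + 1) := by
  have := evalHomog_mem' v F (span (Set.range v)) hF hc
  rwa [← pow_succ'] at this

lemma exists_homog (v : Fin n → A) (d : ℕ) (x : A) (hx : x ∈ (span (Set.range v)) ^ d) :
    ∃ F : MvPolynomial (Fin n) A, F.IsHomogeneous d ∧ eval v F = x := by
  classical
  induction d generalizing x with
  | zero => exact ⟨C x, isHomogeneous_C _ _, eval_C _⟩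
  | succ d ih =>
      rw [pow_succ] at hx
      refine Submodule.mul_induction_on hx ?_ ?_
      · intro y hy z hz
        obtain ⟨F, hFh, hFe⟩ := ih y hy
        obtain ⟨c, hc⟩ := (Submodule.mem_span_range_iff_exists_fun A).mp hz
        have h1 : ∀ i : Fin n, ((C (c i) * X i : MvPolynomial (Fin n) A)).IsHomogeneous 1 :=
          fun i => by simpa using (isHomogeneous_C _ (c i)).mul (isHomogeneous_X _ i)
        refine ⟨F * ∑ i, C (c i) * X i,
          hFh.mul (IsHomogeneous.sum _ _ _ fun i _ => h1 i), ?_⟩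
        rw [_root_.map_mul, hFe, map_sum]
        simp only [_root_.map_mul, eval_C, eval_X]
        rw [← hc]
        simp [smul_eq_mul]
      · rintro x y ⟨F, hF, hFe⟩ ⟨G, hG, hGe⟩
        exact ⟨F + G, hF.add hG, by rw [map_add, hFe, hGe]⟩

lemma degree_add' {σ : Type*} (a b : σ →₀ ℕ) : (a + b).degree = a.degree + b.degree := by
  rw [degree_weight, degree_weight, degree_weight, map_add]

lemma homog_zero_eq_C (F : MvPolynomial (Fin n) A) (hF : F.IsHomogeneous 0) :
    F = C (F.coeff 0) := by
  classical
  ext m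
  rw [coeff_C]
  split_ifs with h
  · rw [← h]
  · by_contra hc
    exact h (((Finsupp.degree_eq_zero_iff m).mp ((degree_weight m).trans (hF hc))).symm)

lemma qr_zero (v : Fin n → A) (F : MvPolynomial (Fin n) A) (hF : F.IsHomogeneous 0)
    (he : eval v F ∈ (span (Set.range v)) ^ (0 + 1)) :
    ∀ m, F.coeff m ∈ span (Set.range v) := by
  intro m
  by_cases hc : F.coeff m = 0
  · simp [hc]
  have hm : m = 0 := (Finsupp.degree_eq_zero_iff m).mp ((degree_weight m).trans (hF hc))
  subst hm
  have hev : eval v F = F.coeff 0 := by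
    conv_lhs => rw [homog_zero_eq_C F hF]
    rw [eval_C]
  rw [← hev]
  simpa [pow_one] using he


end Aux

section QR
open RingTheory.Sequence
variable {A : Type*} [CommRing A]

theorem quasireg :
    ∀ (n : ℕ) (v : Fin n → A), IsWeaklyRegular A (List.ofFn v) →
      ∀ (d : ℕ) (F : MvPolynomial (Fin n) A), F.IsHomogeneous d →
        eval v F ∈ (span (Set.range v)) ^ (d + 1) →
          ∀ m, F.coeff m ∈ span (Set.range v) := by
  intro n
  induction n with
  | zero =>
      intro v _ d F hF he m
      cases d with
      | zero => exact qr_zero v F hF he m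
      | succ d =>
          have hm0 : m = 0 := Finsupp.ext fun i => i.elim0
          subst hm0
          by_cases hc : F.coeff 0 = 0
          · simp [hc]
          · exfalso
            have := (degree_weight (0 : Fin 0 →₀ ℕ)).trans (hF hc)
            simp [Finsupp.degree] at this
  | succ n ih =>
      intro v hreg d
      classical
      set v' : Fin n → A := v ∘ Fin.castSucc with hv'
      set a : A := v (Fin.last n) with ha_def
      set I : Ideal A := span (Set.range v) with hI_def
      set I' : Ideal A := span (Set.range v') with hI'_def
      have hofn : List.ofFn v = List.ofFn v' ++ [a] := by
        rw [List.ofFn_succ' v, List.concat_eq_append]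
        rfl
      have hpair := (isWeaklyRegular_append_iff A (List.ofFn v') [a]).mp (hofn ▸ hreg)
      have hreg' : IsWeaklyRegular A (List.ofFn v') := hpair.1
      have hsreg : IsSMulRegular (A ⧸ (Ideal.ofList (List.ofFn v') • ⊤ : Submodule A A)) a :=
        (isWeaklyRegular_singleton_iff _ a).mp hpair.2
      have hI'list : Ideal.ofList (List.ofFn v') = I' := by
        apply congrArg span
        ext x
        simp [List.mem_ofFn]
      have hsmultop : (Ideal.ofList (List.ofFn v') • ⊤ : Submodule A A) = I' := by
        rw [smul_eq_mul, mul_top, hI'list]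
      have hNZD : ∀ x : A, a * x ∈ I' → x ∈ I' := by
        intro x hx
        have h0 : Submodule.Quotient.mk (p := (Ideal.ofList (List.ofFn v') • ⊤ : Submodule A A)) x = 0 := by
          apply hsreg
          show a • Submodule.Quotient.mk x = a • 0
          rw [smul_zero, ← Submodule.Quotient.mk_smul]
          rw [Submodule.Quotient.mk_eq_zero, hsmultop]
          rwa [smul_eq_mul]
        rw [Submodule.Quotient.mk_eq_zero, hsmultop] at h0
        exact h0
      have haI : a ∈ I := subset_span ⟨Fin.last n, rfl⟩
      have hI'I : I' ≤ I := by
        apply span_mono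
        rintro x ⟨j, rfl⟩
        exact ⟨Fin.castSucc j, rfl⟩
      have hIsplit : I = I' ⊔ span {a} := by
        rw [hI_def, hI'_def, ← span_union]
        apply congrArg span
        ext x
        constructor
        · rintro ⟨i, rfl⟩
          rcases Fin.eq_castSucc_or_eq_last i with ⟨j, rfl⟩ | rfl
          · exact Or.inl ⟨j, rfl⟩
          · exact Or.inr rfl
        · rintro (⟨j, rfl⟩ | h)
          · exact ⟨Fin.castSucc j, rfl⟩
          · exact ⟨Fin.last n, h.symm ▸ rfl⟩
      have powsplit : ∀ k : ℕ, I ^ (k + 1) ≤ I' ^ (k + 1) ⊔ span {a} * I ^ k := by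
        intro k
        induction k with
        | zero =>
            rw [pow_one, pow_one, pow_zero, mul_one, ← hIsplit]
        | succ k ihk =>
            have hb1 : I' ^ (k + 1) * I ≤ I' ^ (k + 2) ⊔ span {a} * I ^ (k + 1) := by
              have hsplit2 : I' ^ (k + 1) * I = I' ^ (k + 1) * I' ⊔ I' ^ (k + 1) * span {a} := by
                conv_lhs => rw [hIsplit]
                rw [Ideal.mul_sup]
              rw [hsplit2]
              apply sup_le
              · exact le_sup_of_le_left (le_of_eq (pow_succ I' (k + 1)).symm)
              · rw [mul_comm]
                exact le_sup_of_le_right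
                  (Ideal.mul_mono le_rfl (Ideal.pow_right_mono hI'I _))
            have hb2 : span {a} * I ^ k * I ≤ I' ^ (k + 2) ⊔ span {a} * I ^ (k + 1) := by
              rw [mul_assoc, ← pow_succ]
              exact le_sup_right
            calc I ^ (k + 2) = I ^ (k + 1) * I := pow_succ I (k + 1)
              _ ≤ (I' ^ (k + 1) ⊔ span {a} * I ^ k) * I := Ideal.mul_mono ihk le_rfl
              _ = I' ^ (k + 1) * I ⊔ span {a} * I ^ k * I := Ideal.sup_mul _ _ _
              _ ≤ I' ^ (k + 2) ⊔ span {a} * I ^ (k + 1) := sup_le hb1 hb2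
      have colon_step : ∀ (k : ℕ) (x : A), x ∈ I' ^ k → a * x ∈ I' ^ (k + 1) →
          x ∈ I' ^ (k + 1) := by
        intro k x hx hax
        obtain ⟨F, hFh, hFe⟩ := exists_homog v' k x hx
        have h2 : eval v' (C a * F) ∈ I' ^ (k + 1) := by
          rw [_root_.map_mul, eval_C, hFe]; exact hax
        have hch : (C a * F).IsHomogeneous k := by
          simpa using (isHomogeneous_C _ a).mul hFh
        have hco := ih v' hreg' k (C a * F) hch h2
        have hcF : ∀ m, F.coeff m ∈ I' := by
          intro m
          apply hNZD
          have := hco m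
          rwa [coeff_C_mul] at this
        rw [← hFe]
        exact evalHomog_mem'' v' F hFh hcF
      have colon : ∀ (k : ℕ) (x : A), a * x ∈ I' ^ k → x ∈ I' ^ k := by
        intro k x hax
        have main : ∀ j : ℕ, x ∈ I' ^ (min j k) := by
          intro j
          induction j with
          | zero => simp [Ideal.one_eq_top]
          | succ j ihj =>
              by_cases hjk : k ≤ j
              · rw [min_eq_right (le_trans hjk (Nat.le_succ j))]
                rwa [min_eq_right hjk] at ihj
              · rw [min_eq_left (by omega)]
                rw [min_eq_left (by omega)] at ihj
                exact colon_step j x ihj (Ideal.pow_le_pow_right (by omega) hax)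
        have := main k
        rwa [min_self] at this
      induction d with
      | zero => exact fun F hF he => qr_zero v F hF he
      | succ d ihd =>
          intro F hF he
          set e : Fin (n + 1) →₀ ℕ := Finsupp.single (Fin.last n) 1 with he_def
          set s1 := F.support.filter (fun m => m (Fin.last n) = 0) with hs1
          set s2 := F.support.filter (fun m => ¬ m (Fin.last n) = 0) with hs2
          set H : MvPolynomial (Fin (n + 1)) A :=
            ∑ m ∈ s2, monomial (m - e) (F.coeff m) with hH_def
          set Gp : MvPolynomial (Fin (n + 1)) A :=
            ∑ m ∈ s1, monomial m (F.coeff m) with hGp_def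
          have hdegF : ∀ m ∈ F.support, m.degree = d + 1 := fun m hm =>
            (degree_weight m).trans (hF (MvPolynomial.mem_support_iff.mp hm))
          have hsub_add : ∀ m ∈ s2, e + (m - e) = m := by
            intro m hm
            have hml : m (Fin.last n) ≠ 0 := (Finset.mem_filter.mp hm).2
            ext i
            simp only [Finsupp.add_apply, Finsupp.tsub_apply]
            rcases eq_or_ne i (Fin.last n) with rfl | hi
            · rw [he_def, Finsupp.single_eq_same]; omega
            · rw [he_def, Finsupp.single_eq_of_ne' (Ne.symm hi)]; omega
          have hFGH : F = Gp + X (Fin.last n) * H := by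
            conv_lhs => rw [F.as_sum]
            rw [← Finset.sum_filter_add_sum_filter_not F.support
              (fun m => m (Fin.last n) = 0)]
            congr 1
            rw [Finset.mul_sum]
            refine Finset.sum_congr rfl fun m hm => ?_
            rw [X, monomial_mul, one_mul, hsub_add m hm]
          have hs2deg : ∀ m ∈ s2, (m - e).degree = d := by
            intro m hm
            have h1 : m.degree = d + 1 := hdegF m (Finset.mem_filter.mp hm).1
            have h2 := degree_add' e (m - e)
            rw [hsub_add m hm] at h2
            have h3 : e.degree = 1 := by rw [he_def]; exact degree_single' _ _
            omega
          have hHh : H.IsHomogeneous d :=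
            IsHomogeneous.sum _ _ _ fun m hm => isHomogeneous_monomial _ (hs2deg m hm)
          have hGph : Gp.IsHomogeneous (d + 1) :=
            IsHomogeneous.sum _ _ _ fun m hm =>
              isHomogeneous_monomial _ (hdegF m (Finset.mem_filter.mp hm).1)
          have hinj := Fin.castSucc_injective n
          set G' : MvPolynomial (Fin n) A :=
            ∑ m ∈ s1.attach, monomial
              (Finsupp.comapDomain Fin.castSucc m.1 hinj.injOn) (F.coeff m.1) with hG'_def
          have hmapDom : ∀ m ∈ s1, Finsupp.mapDomain Fin.castSucc
              (Finsupp.comapDomain Fin.castSucc m hinj.injOn) = m := by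
            intro m hm
            refine Finsupp.mapDomain_comapDomain _ hinj m ?_
            intro i hi
            have hi' : i ∈ m.support := hi
            rcases Fin.eq_castSucc_or_eq_last i with ⟨j, hj⟩ | hlast
            · exact ⟨j, hj.symm⟩
            · exfalso
              have hz : m (Fin.last n) = 0 := by
                simpa using (Finset.mem_filter.mp hm).2
              exact (Finsupp.mem_support_iff.mp hi') (hlast ▸ hz)
          have hrename : rename Fin.castSucc G' = Gp := by
            rw [hG'_def, map_sum, hGp_def,
              ← Finset.sum_attach s1 (fun m => monomial m (F.coeff m))]
            refine Finset.sum_congr rfl fun m _ => ?_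
            rw [rename_monomial, hmapDom m.1 m.2]
          have hG'h : G'.IsHomogeneous (d + 1) := by
            refine IsHomogeneous.sum _ _ _ fun m _ => isHomogeneous_monomial _ ?_
            rw [← degree_mapDomain Fin.castSucc, hmapDom m.1 m.2]
            exact hdegF m.1 (Finset.mem_filter.mp m.2).1
          have hGe : eval v Gp = eval v' G' := by
            rw [← hrename, eval_rename]
          have hFe : eval v F = eval v' G' + a * eval v H := by
            conv_lhs => rw [hFGH]
            rw [map_add, _root_.map_mul, eval_X, hGe]
          have hGmem : eval v' G' ∈ I' ^ (d + 1) := evalHomog_mem v' G' hG'h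
          obtain ⟨P, hP, q, hq, hPq⟩ := Submodule.mem_sup.mp (powsplit (d + 1) he)
          obtain ⟨R, hR, haR⟩ := Ideal.mem_span_singleton_mul.mp hq
          have hRH : R - eval v H ∈ I' ^ (d + 1) := by
            apply colon (d + 1)
            have hkey : a * (R - eval v H) = eval v' G' - P := by
              linear_combination hPq + haR + hFe
            rw [hkey]
            exact sub_mem hGmem (Ideal.pow_le_pow_right (Nat.le_succ _) hP)
          have hHI : eval v H ∈ I ^ (d + 1) := by
            have hE : eval v H = R - (R - eval v H) := by ring
            rw [hE]
            exact sub_mem hR (Ideal.pow_right_mono hI'I _ hRH)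
          have hHco : ∀ m, H.coeff m ∈ I := ihd H hHh hHI
          have hXHmem : a * eval v H ∈ I ^ (d + 2) := by
            have h1 := Ideal.mul_mem_mul haI hHI
            rwa [← pow_succ'] at h1
          have hG'I : eval v' G' ∈ I ^ (d + 2) := by
            have hE : eval v' G' = eval v F - a * eval v H := by
              rw [hFe]; ring
            rw [hE]
            exact sub_mem he hXHmem
          obtain ⟨P₂, hP₂, q₂, hq₂, hPq₂⟩ := Submodule.mem_sup.mp (powsplit (d + 1) hG'I)
          obtain ⟨R₂, hR₂, haR₂⟩ := Ideal.mem_span_singleton_mul.mp hq₂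
          have hR₂' : R₂ ∈ I' ^ (d + 1) := by
            apply colon (d + 1)
            have hkey : a * R₂ = eval v' G' - P₂ := by
              linear_combination hPq₂ + haR₂
            rw [hkey]
            exact sub_mem hGmem (Ideal.pow_le_pow_right (Nat.le_succ _) hP₂)
          obtain ⟨Z, hZh, hZe⟩ := exists_homog v' (d + 1) R₂ hR₂'
          have hGZ : eval v' (G' - C a * Z) ∈ I' ^ (d + 2) := by
            rw [map_sub, _root_.map_mul, eval_C, hZe]
            have hE : eval v' G' - a * R₂ = P₂ := by
              linear_combination - hPq₂ - haR₂
            rw [hE]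
            exact hP₂
          have hGZh : (G' - C a * Z).IsHomogeneous (d + 1) :=
            hG'h.sub (by simpa using (isHomogeneous_C _ a).mul hZh)
          have hG'co : ∀ u, G'.coeff u ∈ I := by
            intro u
            have h1 := ih v' hreg' (d + 1) (G' - C a * Z) hGZh hGZ u
            have hE : G'.coeff u = (G' - C a * Z).coeff u + a * Z.coeff u := by
              rw [coeff_sub, coeff_C_mul]; ring
            rw [hE]
            exact add_mem (hI'I h1) (Ideal.mul_mem_right _ _ haI)
          intro m
          rw [hFGH, coeff_add]
          refine add_mem ?_ ?_
          · by_cases hz : Gp.coeff m = 0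
            · simp [hz]
            · rw [← hrename] at hz ⊢
              obtain ⟨u, hu, -⟩ := coeff_rename_ne_zero _ _ _ hz
              rw [← hu, coeff_rename_mapDomain _ hinj]
              exact hG'co u
          · rw [mul_comm, coeff_mul_X']
            split_ifs with hmem
            · exact hHco _
            · exact zero_mem I

end QR

section Star
variable {A : Type*} [CommRing A]

lemma star_lemma (as : List A) (hreg : RingTheory.Sequence.IsWeaklyRegular A as)
    (I : Ideal A) (hI : I = Ideal.ofList as) (hprime : I.IsPrime) {m n : ℕ} {a b : A}
    (ha : a ∈ I ^ m) (hb : b ∈ I ^ n) (hab : a * b ∈ I ^ (m + n + 1)) :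
    a ∈ I ^ (m + 1) ∨ b ∈ I ^ (n + 1) := by
  classical
  set v : Fin as.length → A := as.get with hv
  have hofn : List.ofFn v = as := List.ofFn_get as
  have hspan : I = span (Set.range v) := by
    rw [hI]
    apply congrArg span
    ext x
    simp [List.mem_iff_get, hv, List.get_eq_getElem]
  obtain ⟨F, hFh, hFe⟩ := exists_homog v m a (hspan ▸ ha)
  obtain ⟨G, hGh, hGe⟩ := exists_homog v n b (hspan ▸ hb)
  have hcoeffs : ∀ u, (F * G).coeff u ∈ I := by
    intro u
    rw [hspan]
    refine quasireg as.length v (hofn.symm ▸ hreg) (m + n) (F * G) (hFh.mul hGh) ?_ u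
    rw [_root_.map_mul, hFe, hGe]
    exact hspan ▸ hab
  haveI := hprime
  have hmap : (MvPolynomial.map (Ideal.Quotient.mk I)) F *
      (MvPolynomial.map (Ideal.Quotient.mk I)) G = 0 := by
    rw [← _root_.map_mul]
    ext u
    rw [coeff_map, coeff_zero, Ideal.Quotient.eq_zero_iff_mem]
    exact hcoeffs u
  rcases mul_eq_zero.mp hmap with h | h
  · left
    have hcF : ∀ u, F.coeff u ∈ span (Set.range v) := by
      intro u
      have h2 : coeff u ((MvPolynomial.map (Ideal.Quotient.mk I)) F) = 0 := by
        rw [h]; rfl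
      rw [coeff_map] at h2
      exact hspan ▸ (Ideal.Quotient.eq_zero_iff_mem.mp h2)
    rw [hspan, ← hFe]
    exact evalHomog_mem'' v F hFh hcF
  · right
    have hcG : ∀ u, G.coeff u ∈ span (Set.range v) := by
      intro u
      have h2 : coeff u ((MvPolynomial.map (Ideal.Quotient.mk I)) G) = 0 := by
        rw [h]; rfl
      rw [coeff_map] at h2
      exact hspan ▸ (Ideal.Quotient.eq_zero_iff_mem.mp h2)
    rw [hspan, ← hGe]
    exact evalHomog_mem'' v G hGh hcG

end Star

section Rees
variable {A : Type*} [CommRing A] (I : Ideal A)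

lemma coeff_mem_of_mem_reesMap {f : reesAlgebra I}
    (hf : f ∈ Ideal.map (algebraMap A (reesAlgebra I)) I) :
    ∀ i, (f : Polynomial A).coeff i ∈ I ^ (i + 1) := by
  have hf' : f ∈ Ideal.span ((algebraMap A (reesAlgebra I)) '' I) := hf
  clear hf
  induction hf' using Submodule.span_induction with
  | mem x hx =>
      obtain ⟨r, hr, rfl⟩ := hx
      intro i
      show ((Polynomial.C r : Polynomial A)).coeff i ∈ I ^ (i + 1)
      rw [Polynomial.coeff_C]
      split_ifs with h
      · subst h; rw [pow_one]; exact hr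
      · exact zero_mem _
  | zero => intro i; simp
  | add x y hx hy hx' hy' =>
      intro i
      have hco : ((x + y : reesAlgebra I) : Polynomial A) = (x : Polynomial A) + y := rfl
      rw [hco, Polynomial.coeff_add]
      exact add_mem (hx' i) (hy' i)
  | smul r x hx hx' =>
      intro i
      rw [smul_eq_mul]
      have hco : ((r * x : reesAlgebra I) : Polynomial A) = (r : Polynomial A) * x := rfl
      rw [hco, Polynomial.coeff_mul]
      refine sum_mem fun z hz => ?_
      have hzi : z.1 + z.2 = i := Finset.HasAntidiagonal.mem_antidiagonal.mp hz
      have h1 : (r : Polynomial A).coeff z.1 ∈ I ^ z.1 := (mem_reesAlgebra_iff I _).mp r.2 z.1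
      have h2 := Ideal.mul_mem_mul h1 (hx' z.2)
      rwa [← pow_add, show z.1 + (z.2 + 1) = i + 1 by omega] at h2

lemma mem_reesMap_of (f : reesAlgebra I) (hf : ∀ i, (f : Polynomial A).coeff i ∈ I ^ (i + 1)) :
    f ∈ Ideal.map (algebraMap A (reesAlgebra I)) I := by
  classical
  set M : Submodule A (Polynomial A) :=
    Submodule.map ((reesAlgebra I).val.toLinearMap)
      ((Ideal.map (algebraMap A (reesAlgebra I)) I).restrictScalars A) with hM
  have claim1 : ∀ (i : ℕ) (x : A), x ∈ I ^ (i + 1) → (Polynomial.monomial i x) ∈ M := by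
    intro i x hx
    rw [pow_succ'] at hx
    refine Submodule.mul_induction_on hx ?_ ?_
    · intro b hb c hc
      refine ⟨(algebraMap A (reesAlgebra I) b) *
        ⟨Polynomial.monomial i c, reesAlgebra.monomial_mem.mpr hc⟩, ?_, ?_⟩
      · exact Ideal.mul_mem_right _ _ (Ideal.mem_map_of_mem _ hb)
      · show (Polynomial.C b) * (Polynomial.monomial i c) = Polynomial.monomial i (b * c)
        rw [Polynomial.C_mul_monomial]
    · intro y z hy hz
      rw [map_add]
      exact add_mem hy hz
  have claim2 : (f : Polynomial A) ∈ M := by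
    have hrw : (f : Polynomial A) = ∑ i ∈ (f : Polynomial A).support,
        Polynomial.monomial i ((f : Polynomial A).coeff i) := Polynomial.as_sum_support _
    rw [hrw]
    exact sum_mem fun i _ => claim1 i _ (hf i)
  obtain ⟨g, hgJ, hg⟩ := claim2
  have : g = f := Subtype.ext hg
  exact this ▸ hgJ

end Rees

/-- Let `A` be a commutative (Noetherian) ring and `I` a prime ideal generated by a
regular sequence. Then the associated graded ring `gr_I(A) = ⊕_{d ≥ 0} I^d/I^{d+1}`
is an integral domain. Here we realize `gr_I(A)` via the canonical isomorphism
`gr_I(A) ≅ Rees(I) / I·Rees(I)`, where `Rees(I) = ⊕_{d ≥ 0} I^d` is the Rees algebra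
(Mathlib's `reesAlgebra I`, a subalgebra of `A[X]`) and `I·Rees(I)` is the ideal of
`Rees(I)` generated by the image of `I`. -/
theorem associatedGraded_isDomain (A : Type*) [CommRing A] [IsNoetherianRing A]
    (as : List A) (hreg : RingTheory.Sequence.IsRegular A as)
    (I : Ideal A) (hI : I = Ideal.ofList as) (hprime : I.IsPrime) :
    IsDomain ((reesAlgebra I) ⧸
      Ideal.map (algebraMap A (reesAlgebra I)) I) := by
  classical
  have hwreg : RingTheory.Sequence.IsWeaklyRegular A as := hreg.toIsWeaklyRegular
  haveI hJp : (Ideal.map (algebraMap A (reesAlgebra I)) I).IsPrime := by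
    constructor
    · intro htop
      have h1 : (1 : reesAlgebra I) ∈ Ideal.map (algebraMap A (reesAlgebra I)) I :=
        htop ▸ Submodule.mem_top
      have h2 := coeff_mem_of_mem_reesMap I h1 0
      have h3 : (1 : A) ∈ I := by simpa using h2
      exact hprime.ne_top ((Ideal.eq_top_iff_one I).mpr h3)
    · intro f g hfg
      by_contra hcon
      push_neg at hcon
      obtain ⟨hfJ, hgJ⟩ := hcon
      have hf : ∃ i, (f : Polynomial A).coeff i ∉ I ^ (i + 1) := by
        by_contra h
        push_neg at h
        exact hfJ (mem_reesMap_of I f h)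
      have hg : ∃ i, (g : Polynomial A).coeff i ∉ I ^ (i + 1) := by
        by_contra h
        push_neg at h
        exact hgJ (mem_reesMap_of I g h)
      set m := Nat.find hf with hm_def
      set n := Nat.find hg with hn_def
      have hm : (f : Polynomial A).coeff m ∉ I ^ (m + 1) := Nat.find_spec hf
      have hn : (g : Polynomial A).coeff n ∉ I ^ (n + 1) := Nat.find_spec hg
      have hmmin : ∀ i < m, (f : Polynomial A).coeff i ∈ I ^ (i + 1) := fun i hi =>
        not_not.mp (Nat.find_min hf hi)
      have hnmin : ∀ i < n, (g : Polynomial A).coeff i ∈ I ^ (i + 1) := fun i hi =>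
        not_not.mp (Nat.find_min hg hi)
      have hfrees : ∀ i, (f : Polynomial A).coeff i ∈ I ^ i := (mem_reesAlgebra_iff _ _).mp f.2
      have hgrees : ∀ i, (g : Polynomial A).coeff i ∈ I ^ i := (mem_reesAlgebra_iff _ _).mp g.2
      have htot : (f : Polynomial A).coeff m * (g : Polynomial A).coeff n ∈ I ^ (m + n + 1) := by
        have hfg' := coeff_mem_of_mem_reesMap I hfg (m + n)
        have hco : (((f * g : reesAlgebra I)) : Polynomial A) = (f : Polynomial A) * g := rfl
        rw [hco, Polynomial.coeff_mul] at hfg'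
        have hmem : ((m, n) : ℕ × ℕ) ∈ Finset.HasAntidiagonal.antidiagonal (m + n) :=
          Finset.HasAntidiagonal.mem_antidiagonal.mpr rfl
        have hsum := Finset.add_sum_erase _
          (fun z : ℕ × ℕ => (f : Polynomial A).coeff z.1 * (g : Polynomial A).coeff z.2) hmem
        have hrest : ∀ z ∈ (Finset.HasAntidiagonal.antidiagonal (m + n)).erase (m, n),
            (f : Polynomial A).coeff z.1 * (g : Polynomial A).coeff z.2 ∈ I ^ (m + n + 1) := by
          intro z hz
          obtain ⟨hne, hzd⟩ := Finset.mem_erase.mp hz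
          have hzsum : z.1 + z.2 = m + n := Finset.HasAntidiagonal.mem_antidiagonal.mp hzd
          rcases lt_or_ge z.1 m with h1 | h1
          · have h3 := Ideal.mul_mem_mul (hmmin z.1 h1) (hgrees z.2)
            rwa [← pow_add, show z.1 + 1 + z.2 = m + n + 1 by omega] at h3
          · have h2 : z.2 < n := by
              by_contra hge
              push_neg at hge
              have hz1 : z.1 = m := by omega
              have hz2 : z.2 = n := by omega
              apply hne
              rw [← hz1, ← hz2]
            have h3 := Ideal.mul_mem_mul (hfrees z.1) (hnmin z.2 h2)
            rwa [← pow_add, show z.1 + (z.2 + 1) = m + n + 1 by omega] at h3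
        have heq : (f : Polynomial A).coeff m * (g : Polynomial A).coeff n
            = (∑ z ∈ Finset.HasAntidiagonal.antidiagonal (m + n),
                (f : Polynomial A).coeff z.1 * (g : Polynomial A).coeff z.2)
              - ∑ z ∈ (Finset.HasAntidiagonal.antidiagonal (m + n)).erase (m, n),
                (f : Polynomial A).coeff z.1 * (g : Polynomial A).coeff z.2 := by
          rw [← hsum]; ring
        rw [heq]
        exact sub_mem hfg' (sum_mem hrest)
      rcases star_lemma as hwreg I hI hprime (hfrees m) (hgrees n) htot with h | h
      · exact hm h
      · exact hn h
  exact Ideal.Quotient.isDomain _
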